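/- Viewing f(z,w) as a monic cubic polynomial in w over ℤ[z], the resultant of f with its w-derivative satisfies Res_w( f(z,w), ∂f/∂w (z,w) ) = 3(z³ − 3z² + 1)²(z³ − 6z² + 3z + 1)²; equivalently, the discriminant of f(z,w) as a cubic in w equals −3(z³ − 3z² + 1)²(z³ − 6z² + 3z + 1)². -/

import Mathlib

open Polynomial

/-- The Sylvester matrix of two polynomials `p`, `q` (with respect to their
natural degrees): the first `q.natDegree` rows contain the coefficients of `p`
in descending order, the remaining `p.natDegree` rows those of `q`. -/
noncomputable def sylvester {R : Type*} [CommRing R] (p q : R[X]) :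
    Matrix (Fin (p.natDegree + q.natDegree)) (Fin (p.natDegree + q.natDegree)) R :=
  Matrix.of fun i j =>
    if (i : ℕ) < q.natDegree then
      (if (i : ℕ) ≤ (j : ℕ) ∧ (j : ℕ) ≤ p.natDegree + (i : ℕ) then
        p.coeff (p.natDegree + (i : ℕ) - (j : ℕ)) else 0)
    else
      (if (i : ℕ) - q.natDegree ≤ (j : ℕ) ∧ (j : ℕ) ≤ q.natDegree + ((i : ℕ) - q.natDegree) then
        q.coeff (q.natDegree + ((i : ℕ) - q.natDegree) - (j : ℕ)) else 0)

/-- The resultant of two polynomials, i.e. the determinant of their Sylvester matrix. -/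
noncomputable def resultant {R : Type*} [CommRing R] (p q : R[X]) : R :=
  (_root_.sylvester p q).det

/-- `f(z,w) = w³ + (−z³+6z²−6z−1)w² + (z³−3z²+3z+1)w − z³`. -/
def fpoly {R : Type*} [CommRing R] (z w : R) : R :=
  w ^ 3 + (-z ^ 3 + 6 * z ^ 2 - 6 * z - 1) * w ^ 2 + (z ^ 3 - 3 * z ^ 2 + 3 * z + 1) * w - z ^ 3

set_option maxHeartbeats 1000000 in
lemma det5_aux {R : Type*} [CommRing R] (a0 a1 a2 a3 b0 b1 b2 : R) :
    (!![a3, a2, a1, a0, 0;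
        0, a3, a2, a1, a0;
        b2, b1, b0, 0, 0;
        0, b2, b1, b0, 0;
        0, 0, b2, b1, b0] : Matrix (Fin 5) (Fin 5) R).det =
      a0*a0*b2*b2*b2 - a0*a1*b1*b2*b2 - 2*a0*a2*b0*b2*b2 + a0*a2*b1*b1*b2 + 3*a0*a3*b0*b1*b2
      - a0*a3*b1*b1*b1 + a1*a1*b0*b2*b2 - a1*a2*b0*b1*b2 - 2*a1*a3*b0*b0*b2 + a1*a3*b0*b1*b1
      + a2*a2*b0*b0*b2 - a2*a3*b0*b0*b1 + a3*a3*b0*b0*b0 := by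
  simp [Matrix.det_succ_row_zero, Fin.sum_univ_succ, Fin.succAbove]
  ring

set_option maxHeartbeats 2000000 in
set_option maxRecDepth 8000 in
/-- Viewing `f(z,w)` as a (monic cubic) polynomial in `w` over `ℤ[z]` (so below the outer
variable is `w` and the inner variable is `z`),
`Res_w(f(z,w), ∂f/∂w(z,w)) = 3(z³ − 3z² + 1)²(z³ − 6z² + 3z + 1)²`; equivalently, the
discriminant `−Res_w(f, ∂f/∂w)` of `f` as a cubic in `w` equals
`−3(z³ − 3z² + 1)²(z³ − 6z² + 3z + 1)²`. -/
theorem statement10 :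
    _root_.resultant (fpoly (Polynomial.C (Polynomial.X : Polynomial ℤ)) Polynomial.X)
      (Polynomial.derivative (fpoly (Polynomial.C (Polynomial.X : Polynomial ℤ)) Polynomial.X)) =
    3 * ((Polynomial.X : Polynomial ℤ) ^ 3 - 3 * Polynomial.X ^ 2 + 1) ^ 2
      * (Polynomial.X ^ 3 - 6 * Polynomial.X ^ 2 + 3 * Polynomial.X + 1) ^ 2 := by
  set z : ℤ[X] := X with hz
  set p : (ℤ[X])[X] := fpoly (C z) X with hp
  set q : (ℤ[X])[X] := derivative p with hq
  have hpe : p = X ^ 3 + C (-z ^ 3 + 6 * z ^ 2 - 6 * z - 1) * X ^ 2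
      + C (z ^ 3 - 3 * z ^ 2 + 3 * z + 1) * X + C (-z ^ 3) := by
    rw [hp]; unfold fpoly
    simp only [map_add, map_sub, map_neg, map_mul, map_pow, map_one, map_ofNat]
    ring
  have hqe : q = C 3 * X ^ 2 + C (2 * (-z ^ 3 + 6 * z ^ 2 - 6 * z - 1)) * X
      + C (z ^ 3 - 3 * z ^ 2 + 3 * z + 1) := by
    rw [hq, hpe]
    simp only [derivative_add, derivative_mul, derivative_C, derivative_X_pow, derivative_X,
      map_mul]
    push_cast
    simp only [map_ofNat]
    ring
  have hp3 : p.natDegree = 3 := by rw [hpe]; compute_degree!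
  have hq2 : q.natDegree = 2 := by
    rw [hqe]; compute_degree!
  have hpc0 : p.coeff 0 = -z ^ 3 := by rw [hpe]; simp only [coeff_add, coeff_C_mul, coeff_X_pow, coeff_C, coeff_X]; norm_num
  have hpc1 : p.coeff 1 = z ^ 3 - 3 * z ^ 2 + 3 * z + 1 := by rw [hpe]; simp only [coeff_add, coeff_C_mul, coeff_X_pow, coeff_C, coeff_X]; norm_num
  have hpc2 : p.coeff 2 = -z ^ 3 + 6 * z ^ 2 - 6 * z - 1 := by rw [hpe]; simp only [coeff_add, coeff_C_mul, coeff_X_pow, coeff_C, coeff_X]; norm_num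
  have hpc3 : p.coeff 3 = 1 := by rw [hpe]; simp only [coeff_add, coeff_C_mul, coeff_X_pow, coeff_C, coeff_X]; norm_num
  have hqc0 : q.coeff 0 = z ^ 3 - 3 * z ^ 2 + 3 * z + 1 := by rw [hqe]; simp only [coeff_add, coeff_C_mul, coeff_X_pow, coeff_C, coeff_X]; norm_num
  have hqc1 : q.coeff 1 = 2 * (-z ^ 3 + 6 * z ^ 2 - 6 * z - 1) := by rw [hqe]; simp only [coeff_add, coeff_C_mul, coeff_X_pow, coeff_C, coeff_X]; norm_num
  have hqc2 : q.coeff 2 = 3 := by rw [hqe]; simp only [coeff_add, coeff_C_mul, coeff_X_pow, coeff_C, coeff_X]; norm_num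
  have hd : p.natDegree + q.natDegree = 5 := by rw [hp3, hq2]
  have key : _root_.resultant p q =
      ((_root_.sylvester p q).submatrix (finCongr hd.symm) (finCongr hd.symm)).det := by
    rw [Matrix.det_submatrix_equiv_self]; rfl
  rw [key]
  rw [show ((_root_.sylvester p q).submatrix (finCongr hd.symm) (finCongr hd.symm) :
      Matrix (Fin 5) (Fin 5) ℤ[X]) =
    !![p.coeff 3, p.coeff 2, p.coeff 1, p.coeff 0, 0;
       0, p.coeff 3, p.coeff 2, p.coeff 1, p.coeff 0;
       q.coeff 2, q.coeff 1, q.coeff 0, 0, 0;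
       0, q.coeff 2, q.coeff 1, q.coeff 0, 0;
       0, 0, q.coeff 2, q.coeff 1, q.coeff 0] from by
    ext i j
    fin_cases i <;> fin_cases j <;>
      (simp only [Matrix.submatrix_apply, finCongr_apply, _root_.sylvester, Matrix.of_apply,
        Fin.coe_cast, hp3, hq2,
        show ((0:Fin 5):ℕ)=0 from rfl, show ((1:Fin 5):ℕ)=1 from rfl,
        show ((2:Fin 5):ℕ)=2 from rfl, show ((3:Fin 5):ℕ)=3 from rfl,
        show ((4:Fin 5):ℕ)=4 from rfl];
       norm_num [Matrix.cons_val', Matrix.cons_val_zero, Matrix.cons_val_one,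
        Matrix.head_cons, Matrix.head_fin_const, Matrix.empty_val', Matrix.cons_val_fin_one])]
  rw [det5_aux]
  rw [hpc0, hpc1, hpc2, hpc3, hqc0, hqc1, hqc2]
  ring
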